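/- Let r ∈ (0,1] and f : [a,b] → ℝ be of r-bounded variation. Then f can be written as the difference of two nondecreasing functions; specifically, both (v_f)^{1/r} and (v_f)^{1/r} - f are nondecreasing, where v_f(x) = V^r_{[a,x]}(f). -/
import Mathlib


/-- The set of `r`-variation sums of `f` over partitions of `[a,b]`. -/
def rVarSums (r a b : ℝ) (f : ℝ → ℝ) : Set ℝ :=
  {s | ∃ (n : ℕ) (x : ℕ → ℝ), x 0 = a ∧ x n = b ∧ (∀ i, i < n → x i < x (i + 1)) ∧
    s = ∑ i ∈ Finset.range n, |f (x (i + 1)) - f (x i)| ^ r}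

lemma rVarSums_nonneg {r a b : ℝ} {f : ℝ → ℝ} {s : ℝ}
    (hs : s ∈ rVarSums r a b f) : 0 ≤ s := by
  obtain ⟨n, x, -, -, -, rfl⟩ := hs
  exact Finset.sum_nonneg fun i _ => Real.rpow_nonneg (abs_nonneg _) r

lemma rVarSums_nonempty {r a b : ℝ} (f : ℝ → ℝ) (hab : a ≤ b) :
    (rVarSums r a b f).Nonempty := by
  rcases eq_or_lt_of_le hab with rfl | h
  · exact ⟨0, 0, fun _ => a, rfl, rfl, fun i hi => absurd hi (Nat.not_lt_zero i), by simp⟩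
  · refine ⟨|f b - f a| ^ r, 1, fun i => if i = 0 then a else b, by simp, by simp, ?_, by simp⟩
    intro i hi
    interval_cases i
    simpa using h

lemma rVarSums_append {r a c d : ℝ} (f : ℝ → ℝ) (hcd : c < d) {s : ℝ}
    (hs : s ∈ rVarSums r a c f) : s + |f d - f c| ^ r ∈ rVarSums r a d f := by
  obtain ⟨n, x, h0, hn, hmono, rfl⟩ := hs
  refine ⟨n + 1, fun i => if i = n + 1 then d else x i, by simp [h0], by simp, ?_, ?_⟩
  · intro i hi
    rcases Nat.lt_or_ge i n with h | h
    · simp only [if_neg (by omega : ¬ i = n+1), if_neg (by omega : ¬ i+1 = n+1)]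
      exact hmono i h
    · have hin : i = n := by omega
      subst hin
      simp only [if_neg (by omega : ¬ i = i+1), if_pos rfl]
      rw [hn]; exact hcd
  · rw [Finset.sum_range_succ]
    congr 1
    · apply Finset.sum_congr rfl
      intro i hi
      simp only [Finset.mem_range] at hi
      simp only [if_neg (show ¬ i + 1 = n + 1 by omega), if_neg (show ¬ i = n + 1 by omega)]
    · simp [if_neg (show ¬ n = n + 1 by omega), hn]

lemma rVarSums_bdd {r a b : ℝ} {f : ℝ → ℝ}
    (hbv : BddAbove (rVarSums r a b f)) {x : ℝ} (hx : x ∈ Set.Icc a b) :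
    BddAbove (rVarSums r a x f) := by
  obtain ⟨M, hM⟩ := hbv
  rcases eq_or_lt_of_le hx.2 with rfl | h
  · exact ⟨M, hM⟩
  · refine ⟨M, fun s hs => ?_⟩
    have h1 := hM (rVarSums_append f h hs)
    have h2 : 0 ≤ |f b - f x| ^ r := Real.rpow_nonneg (abs_nonneg _) r
    linarith

lemma rVarSums_key {r a b : ℝ} {f : ℝ → ℝ} (hbv : BddAbove (rVarSums r a b f))
    {x y : ℝ} (hx : a ≤ x) (hxy : x < y) (hy : y ≤ b) :
    sSup (rVarSums r a x f) + |f y - f x| ^ r ≤ sSup (rVarSums r a y f) := by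
  have hby : BddAbove (rVarSums r a y f) := rVarSums_bdd hbv ⟨hx.trans hxy.le, hy⟩
  have hne : (rVarSums r a x f).Nonempty := rVarSums_nonempty f hx
  have hle : sSup (rVarSums r a x f) ≤ sSup (rVarSums r a y f) - |f y - f x| ^ r := by
    apply csSup_le hne
    intro s hs
    have := le_csSup hby (rVarSums_append f hxy hs)
    linarith
  linarith

lemma rVarSums_sup_nonneg {r a b : ℝ} {f : ℝ → ℝ} (hbv : BddAbove (rVarSums r a b f))
    {x : ℝ} (hx : x ∈ Set.Icc a b) : 0 ≤ sSup (rVarSums r a x f) := by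
  obtain ⟨s, hs⟩ := rVarSums_nonempty f hx.1
  exact (rVarSums_nonneg hs).trans (le_csSup (rVarSums_bdd hbv hx) hs)

lemma real_rpow_superadd {s t p : ℝ} (hs : 0 ≤ s) (ht : 0 ≤ t) (hp : 1 ≤ p) :
    s ^ p + t ^ p ≤ (s + t) ^ p := by
  have h := NNReal.add_rpow_le_rpow_add ⟨s, hs⟩ ⟨t, ht⟩ hp
  rw [← NNReal.coe_le_coe] at h
  push_cast [NNReal.coe_rpow] at h
  exact h

theorem stmt_12 (r a b : ℝ) (hr : 0 < r) (hr1 : r ≤ 1) (hab : a < b) (f : ℝ → ℝ)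
    (hbv : BddAbove (rVarSums r a b f)) :
    MonotoneOn (fun x => (sSup (rVarSums r a x f)) ^ (1 / r)) (Set.Icc a b) ∧
    MonotoneOn (fun x => (sSup (rVarSums r a x f)) ^ (1 / r) - f x) (Set.Icc a b) ∧
    ∃ g h : ℝ → ℝ, MonotoneOn g (Set.Icc a b) ∧ MonotoneOn h (Set.Icc a b) ∧
      ∀ x ∈ Set.Icc a b, f x = g x - h x := by
  have h1r : (1:ℝ) ≤ 1 / r := by rw [le_div_iff₀ hr]; linarith
  have hvmono : ∀ x ∈ Set.Icc a b, ∀ y ∈ Set.Icc a b, x ≤ y →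
      sSup (rVarSums r a x f) ≤ sSup (rVarSums r a y f) := by
    intro x hx y hy hxy
    rcases eq_or_lt_of_le hxy with rfl | h
    · exact le_refl _
    · have hk := rVarSums_key hbv hx.1 h hy.2
      have h2 : 0 ≤ |f y - f x| ^ r := Real.rpow_nonneg (abs_nonneg _) r
      linarith
  have hkey2 : ∀ x ∈ Set.Icc a b, ∀ y ∈ Set.Icc a b, x ≤ y →
      sSup (rVarSums r a x f) ^ (1/r) + |f y - f x| ≤ sSup (rVarSums r a y f) ^ (1/r) := by
    intro x hx y hy hxy
    rcases eq_or_lt_of_le hxy with rfl | h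
    · simp
    · have hk := rVarSums_key hbv hx.1 h hy.2
      have h0x := rVarSums_sup_nonneg hbv hx
      have habsr : 0 ≤ |f y - f x| ^ r := Real.rpow_nonneg (abs_nonneg _) r
      have habs : (|f y - f x| ^ r) ^ (1/r) = |f y - f x| := by
        rw [← Real.rpow_mul (abs_nonneg _), mul_one_div_cancel hr.ne', Real.rpow_one]
      calc sSup (rVarSums r a x f) ^ (1/r) + |f y - f x|
          = sSup (rVarSums r a x f) ^ (1/r) + (|f y - f x| ^ r) ^ (1/r) := by rw [habs]
        _ ≤ (sSup (rVarSums r a x f) + |f y - f x| ^ r) ^ (1/r) :=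
            real_rpow_superadd h0x habsr h1r
        _ ≤ sSup (rVarSums r a y f) ^ (1/r) :=
            Real.rpow_le_rpow (by linarith) hk (by linarith)
  have hmono1 : MonotoneOn (fun x => (sSup (rVarSums r a x f)) ^ (1 / r)) (Set.Icc a b) := by
    intro x hx y hy hxy
    exact Real.rpow_le_rpow (rVarSums_sup_nonneg hbv hx) (hvmono x hx y hy hxy) (by linarith)
  have hmono2 : MonotoneOn (fun x => (sSup (rVarSums r a x f)) ^ (1 / r) - f x) (Set.Icc a b) := by
    intro x hx y hy hxy
    have hk := hkey2 x hx y hy hxy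
    have := le_abs_self (f y - f x)
    simp only
    linarith
  exact ⟨hmono1, hmono2,
    fun x => (sSup (rVarSums r a x f)) ^ (1 / r),
    fun x => (sSup (rVarSums r a x f)) ^ (1 / r) - f x,
    hmono1, hmono2, fun x _ => by ring⟩
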